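/- arXiv:1902.06722 — 2 statements merged into one kernel-verified Lean document; each statement's English description precedes it below -/
import Mathlib

section
/- Cauchy interlacing / Rayleigh–Ritz inequality: let F be a self-adjoint operator on a finite-dimensional complex inner product space V of dimension n with eigenvalues λ₁ ≤ … ≤ λₙ (with multiplicity). Let W ⊆ V be a subspace of dimension m with orthogonal projection P, and let μ₁ ≤ … ≤ μₘ be the eigenvalues of the compression P∘F∘P restricted to W. Then λₖ ≤ μₖ for all k = 1, …, m. -/
open scoped InnerProductSpace

private lemma interlace_expand {E : Type*} [NormedAddCommGroup E] [InnerProductSpace ℂ E]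
    {ι : Type*} [Fintype ι]
    (b : OrthonormalBasis ι ℂ E) (T : E →ₗ[ℂ] E) (r : ι → ℝ)
    (hT : ∀ i, T (b i) = (r i : ℂ) • b i) (x : E) :
    ⟪x, T x⟫_ℂ = ((∑ i, r i * ‖⟪b i, x⟫_ℂ‖^2 : ℝ) : ℂ) := by
  have hTx : T x = ∑ i, ⟪b i, x⟫_ℂ • ((r i : ℂ) • b i) := by
    conv_lhs => rw [← b.sum_repr x]
    rw [map_sum]
    simp [hT, b.repr_apply_apply]
  rw [hTx, inner_sum]
  push_cast
  congr 1
  ext i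
  rw [inner_smul_right, inner_smul_right, ← inner_conj_symm x (b i)]
  rw [show ⟪b i, x⟫_ℂ * ((r i : ℂ) * (starRingEnd ℂ) ⟪b i, x⟫_ℂ) =
      (r i : ℂ) * (⟪b i, x⟫_ℂ * (starRingEnd ℂ) ⟪b i, x⟫_ℂ) by ring, Complex.mul_conj']

private lemma interlace_norm_sq {E : Type*} [NormedAddCommGroup E] [InnerProductSpace ℂ E]
    {ι : Type*} [Fintype ι] (b : OrthonormalBasis ι ℂ E) (x : E) :
    (∑ i, ‖⟪b i, x⟫_ℂ‖^2 : ℝ) = ‖x‖^2 := by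
  have h := interlace_expand b (LinearMap.id) (fun _ => 1) (by simp) x
  simp only [LinearMap.id_apply, one_mul] at h
  have h' : ⟪x, x⟫_ℂ = (‖x‖ : ℂ)^2 := inner_self_eq_norm_sq_to_K x
  rw [h'] at h
  exact_mod_cast h.symm


/-- Cauchy interlacing / Rayleigh–Ritz.  If `F` is self-adjoint on `V`
with eigenvalues `lam : Fin n → ℝ` in non-decreasing order with multiplicity, `W` is
an `m`-dimensional subspace, and `mu : Fin m → ℝ` are the eigenvalues (non-decreasing,
with multiplicity) of the compression of `F` to `W`, then `lam k ≤ mu k` for all `k`. -/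
theorem stmt_3 {V : Type*} [NormedAddCommGroup V] [InnerProductSpace ℂ V]
    [FiniteDimensional ℂ V] {n m : ℕ} (hmn : m ≤ n)
    (F : V →ₗ[ℂ] V) (hF : F.IsSymmetric)
    (lam : Fin n → ℝ) (hlam : Monotone lam)
    (b : OrthonormalBasis (Fin n) ℂ V)
    (hb : ∀ i, F (b i) = (lam i : ℂ) • b i)
    (W : Submodule ℂ V)
    (mu : Fin m → ℝ) (hmu : Monotone mu)
    (c : OrthonormalBasis (Fin m) ℂ W)
    (hc : ∀ i, (W.orthogonalProjectionOnto.toLinearMap ∘ₗ F ∘ₗ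
      W.subtype ∘ₗ W.orthogonalProjectionOnto.toLinearMap ∘ₗ W.subtype) (c i)
        = (mu i : ℂ) • c i) :
    ∀ k : Fin m, lam (Fin.castLE hmn k) ≤ mu k := by
  intro k
  have hkm : (k : ℕ) + 1 ≤ m := k.isLt
  have hkn : (k : ℕ) ≤ n := le_trans (le_of_lt k.isLt) hmn
  set k' : Fin n := Fin.castLE hmn k with hk'
  -- the two subspaces
  set e₁ : Fin ((k : ℕ) + 1) → V := fun j => (c (Fin.castLE hkm j) : V) with he₁
  set e₂ : Fin (k : ℕ) → V := fun j => b (Fin.castLE hkn j) with he₂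
  set K₁ : Submodule ℂ V := Submodule.span ℂ (Set.range e₁) with hK₁
  set S : Submodule ℂ V := Submodule.span ℂ (Set.range e₂) with hS
  set K₂ : Submodule ℂ V := Sᗮ with hK₂
  have hon₁ : Orthonormal ℂ e₁ :=
    (c.orthonormal.comp_linearIsometry W.subtypeₗᵢ).comp _ (Fin.castLE_injective hkm)
  have hon₂ : Orthonormal ℂ e₂ := b.orthonormal.comp _ (Fin.castLE_injective hkn)
  have hdimV : Module.finrank ℂ V = n := by
    rw [Module.finrank_eq_card_basis b.toBasis, Fintype.card_fin]
  have hd₁ : Module.finrank ℂ K₁ = (k : ℕ) + 1 := by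
    rw [hK₁, finrank_span_eq_card hon₁.linearIndependent, Fintype.card_fin]
  have hdS : Module.finrank ℂ S = (k : ℕ) := by
    rw [hS, finrank_span_eq_card hon₂.linearIndependent, Fintype.card_fin]
  have hd₂ : Module.finrank ℂ K₂ = n - (k : ℕ) := by
    have h := Submodule.finrank_add_finrank_orthogonal (K := S)
    rw [hdimV, hdS] at h
    rw [hK₂]
    omega
  -- a nonzero vector in the intersection
  have hpos : 0 < Module.finrank ℂ ↥(K₁ ⊓ K₂) := by
    have h1 := Submodule.finrank_sup_add_finrank_inf_eq K₁ K₂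
    have h2 : Module.finrank ℂ ↥(K₁ ⊔ K₂) ≤ n := hdimV ▸ Submodule.finrank_le _
    omega
  haveI : Nontrivial ↥(K₁ ⊓ K₂) := Module.finrank_pos_iff.mp hpos
  obtain ⟨⟨x, hx⟩, hxne⟩ := exists_ne (0 : ↥(K₁ ⊓ K₂))
  have hx0 : x ≠ 0 := by
    simpa [Submodule.mk_eq_zero] using hxne
  have hxK₁ : x ∈ K₁ := hx.1
  have hxK₂ : x ∈ K₂ := hx.2
  have hxW : x ∈ W := by
    refine Submodule.span_le.2 ?_ hxK₁
    rintro _ ⟨j, rfl⟩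
    exact (c (Fin.castLE hkm j)).2
  set w : W := ⟨x, hxW⟩ with hw
  -- lower bound: lam k' * ‖x‖^2 ≤ re ⟪x, F x⟫
  have hFx : ⟪x, F x⟫_ℂ = ((∑ i, lam i * ‖⟪b i, x⟫_ℂ‖^2 : ℝ) : ℂ) :=
    interlace_expand b F lam hb x
  have hlow : lam k' * ‖x‖^2 ≤ ∑ i, lam i * ‖⟪b i, x⟫_ℂ‖^2 := by
    rw [← interlace_norm_sq b x, Finset.mul_sum]
    apply Finset.sum_le_sum
    intro i _
    by_cases hik : (i : ℕ) < (k : ℕ)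
    · have : ⟪b i, x⟫_ℂ = 0 := by
        refine Submodule.inner_right_of_mem_orthogonal ?_ hxK₂
        exact Submodule.subset_span ⟨⟨(i : ℕ), hik⟩, by simp [he₂, Fin.ext_iff]⟩
      simp [this]
    · have hki : k' ≤ i := by
        rw [Fin.le_def]; simpa [hk'] using not_lt.mp hik
      have := hlam hki
      nlinarith [sq_nonneg ‖⟪b i, x⟫_ℂ‖]
  -- upper bound
  set G : W →ₗ[ℂ] W := (W.orthogonalProjectionOnto.toLinearMap ∘ₗ F ∘ₗ
      W.subtype ∘ₗ W.orthogonalProjectionOnto.toLinearMap ∘ₗ W.subtype) with hG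
  have hGw : ⟪w, G w⟫_ℂ = ((∑ j, mu j * ‖⟪c j, w⟫_ℂ‖^2 : ℝ) : ℂ) :=
    interlace_expand c G mu hc w
  -- ⟪w, G w⟫ = ⟪x, F x⟫
  have hGwFx : ⟪w, G w⟫_ℂ = ⟪x, F x⟫_ℂ := by
    have hPx : W.orthogonalProjectionOnto x = w := by
      simpa [hw] using W.orthogonalProjectionOnto_mem_subspace_eq_self w
    have hGw2 : G w = W.orthogonalProjectionOnto (F x) := by
      simp [hG, LinearMap.comp_apply, hw, hPx]
    rw [Submodule.coe_inner, hGw2]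
    have horth : ⟪x, F x - ↑(W.orthogonalProjectionOnto (F x))⟫_ℂ = 0 :=
      Submodule.inner_right_of_mem_orthogonal hxW
        (Submodule.sub_starProjection_mem_orthogonal (K := W) (F x))
    have := inner_sub_right (𝕜 := ℂ) x (F x) (↑(W.orthogonalProjectionOnto (F x)))
    rw [horth] at this
    simp only [hw]
    linear_combination this
  have hupp : ∑ j, mu j * ‖⟪c j, w⟫_ℂ‖^2 ≤ mu k * ‖x‖^2 := by
    have hnw : ‖w‖ = ‖x‖ := rfl
    rw [← hnw, ← interlace_norm_sq c w, Finset.mul_sum]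
    apply Finset.sum_le_sum
    intro j _
    by_cases hjk : j ≤ k
    · have := hmu hjk
      nlinarith [sq_nonneg ‖⟪c j, w⟫_ℂ‖]
    · have hkj : (k : ℕ) < (j : ℕ) := by
        have := not_le.mp hjk
        exact this
      have hcw : ⟪c j, w⟫_ℂ = 0 := by
        rw [Submodule.coe_inner]
        have hmem : x ∈ (ℂ ∙ ((c j : W) : V))ᗮ := by
          refine Submodule.span_le.2 ?_ hxK₁
          rintro _ ⟨i, rfl⟩
          rw [SetLike.mem_coe, Submodule.mem_orthogonal_singleton_iff_inner_right]
          rw [show (⟪((c j : W) : V), e₁ i⟫_ℂ) = ⟪c j, c (Fin.castLE hkm i)⟫_ℂ from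
            (Submodule.coe_inner W (c j) (c (Fin.castLE hkm i))).symm]
          refine c.orthonormal.2 (fun h => ?_)
          have hji : (j : ℕ) = (i : ℕ) := by simpa [Fin.ext_iff] using h
          have := i.isLt
          omega
        exact Submodule.inner_right_of_mem_orthogonal
          (Submodule.mem_span_singleton_self _) hmem
      simp [hcw]
  -- combine
  have hsums : (∑ j, mu j * ‖⟪c j, w⟫_ℂ‖^2 : ℝ) = ∑ i, lam i * ‖⟪b i, x⟫_ℂ‖^2 := by
    have := hGw.symm.trans (hGwFx.trans hFx)
    exact_mod_cast this
  have hx2 : (0 : ℝ) < ‖x‖^2 := by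
    have : ‖x‖ ≠ 0 := norm_ne_zero_iff.mpr hx0
    positivity
  have : lam k' * ‖x‖^2 ≤ mu k * ‖x‖^2 := by
    calc lam k' * ‖x‖^2 ≤ ∑ i, lam i * ‖⟪b i, x⟫_ℂ‖^2 := hlow
    _ = ∑ j, mu j * ‖⟪c j, w⟫_ℂ‖^2 := hsums.symm
    _ ≤ mu k * ‖x‖^2 := hupp
  exact le_of_mul_le_mul_right this hx2
end

section
/- Main approximation theorem (finite-dimensional version): let F be a self-adjoint operator on a complex inner product space (possibly infinite-dimensional Hilbert space restricted to a finite-dimensional invariant setting), with m linearly independent eigenvectors x₁,…,xₘ for eigenvalues λ₁ ≤ … ≤ λₘ, equal to the m smallest eigenvalues of F counted with multiplicity. Suppose for each k a sequence x_{kn} with x_{kn} → x_k in norm and ⟨x_{sn}, F x_{qn}⟩ → ⟨x_s, F x_q⟩ for all 1 ≤ s,q ≤ m. Let 𝒱ₙ = span(x_{1n},…,x_{mn}) and let λ̂₁⁽ⁿ⁾ ≤ … ≤ λ̂ₘ⁽ⁿ⁾ be the eigenvalues of the compression of F to 𝒱ₙ (defined for n large enough that dim 𝒱ₙ = m). Then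 λ̂ₖ⁽ⁿ⁾ → λₖ for each k = 1,…,m. -/
set_option linter.unusedSectionVars false
set_option maxHeartbeats 1000000
open Filter Topology Finset
open scoped InnerProductSpace

namespace Stmt15

variable {E : Type*} [NormedAddCommGroup E] [InnerProductSpace ℂ E]

lemma coord_zero {d : ℕ} (e : OrthonormalBasis (Fin d) ℂ E) (s : Set (Fin d))
    {v : E} (hv : v ∈ Submodule.span ℂ (e '' s)) {i : Fin d} (hi : i ∉ s) :
    ⟪e i, v⟫_ℂ = 0 := by
  have hle : Submodule.span ℂ (e '' s) ≤ LinearMap.ker ((innerSL ℂ (e i)).toLinearMap) := by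
    rw [Submodule.span_le]
    rintro _ ⟨j, hj, rfl⟩
    simp only [SetLike.mem_coe, LinearMap.mem_ker, ContinuousLinearMap.coe_coe, innerSL_apply_apply]
    exact e.orthonormal.2 (fun h => hi (h ▸ hj))
  simpa using hle hv

lemma expand_inner {d : ℕ} (e : OrthonormalBasis (Fin d) ℂ E) (T : E →ₗ[ℂ] E)
    (r : Fin d → ℝ) (hT : ∀ i, T (e i) = (r i : ℂ) • e i) (v : E) :
    RCLike.re ⟪v, T v⟫_ℂ = ∑ i, r i * ‖⟪e i, v⟫_ℂ‖ ^ 2 := by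
  have hTv : T v = ∑ i, (⟪e i, v⟫_ℂ * (r i : ℂ)) • e i := by
    conv_lhs => rw [← e.sum_repr' v]
    rw [map_sum]
    refine Finset.sum_congr rfl fun i _ => ?_
    rw [map_smul, hT i, smul_smul]
  rw [hTv, inner_sum]
  rw [map_sum]
  refine Finset.sum_congr rfl fun i _ => ?_
  rw [inner_smul_right, ← inner_conj_symm v (e i)]
  set z := ⟪e i, v⟫_ℂ
  have hz : z * (r i : ℂ) * (starRingEnd ℂ) z = ((r i * ‖z‖ ^ 2 : ℝ) : ℂ) := by
    rw [mul_comm z, mul_assoc, Complex.mul_conj']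
    push_cast
    ring
  rw [hz]; exact Complex.ofReal_re _

lemma expand_norm_sq {d : ℕ} (e : OrthonormalBasis (Fin d) ℂ E) (v : E) :
    ‖v‖ ^ 2 = ∑ i, ‖⟪e i, v⟫_ℂ‖ ^ 2 := by
  rw [← e.repr.norm_map v]
  rw [EuclideanSpace.norm_eq]
  rw [Real.sq_sqrt (by positivity)]
  refine Finset.sum_congr rfl fun i _ => ?_
  rw [e.repr_apply_apply]

lemma ray_le {d : ℕ} (e : OrthonormalBasis (Fin d) ℂ E) (T : E →ₗ[ℂ] E)
    (r : Fin d → ℝ) (hT : ∀ i, T (e i) = (r i : ℂ) • e i)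
    (s : Set (Fin d)) (t : ℝ) (hs : ∀ i ∈ s, r i ≤ t)
    {v : E} (hv : v ∈ Submodule.span ℂ (e '' s)) :
    RCLike.re ⟪v, T v⟫_ℂ ≤ t * ‖v‖ ^ 2 := by
  rw [expand_inner e T r hT v, expand_norm_sq e v, Finset.mul_sum]
  refine Finset.sum_le_sum fun i _ => ?_
  by_cases hi : i ∈ s
  · exact mul_le_mul_of_nonneg_right (hs i hi) (by positivity)
  · rw [coord_zero e s hv hi]; simp

lemma ray_ge {d : ℕ} (e : OrthonormalBasis (Fin d) ℂ E) (T : E →ₗ[ℂ] E)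
    (r : Fin d → ℝ) (hT : ∀ i, T (e i) = (r i : ℂ) • e i)
    (s : Set (Fin d)) (t : ℝ) (hs : ∀ i ∈ s, t ≤ r i)
    {v : E} (hv : v ∈ Submodule.span ℂ (e '' s)) :
    t * ‖v‖ ^ 2 ≤ RCLike.re ⟪v, T v⟫_ℂ := by
  rw [expand_inner e T r hT v, expand_norm_sq e v, Finset.mul_sum]
  refine Finset.sum_le_sum fun i _ => ?_
  by_cases hi : i ∈ s
  · exact mul_le_mul_of_nonneg_right (hs i hi) (by positivity)
  · rw [coord_zero e s hv hi]; simp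


section Compression

variable {H : Type*} [NormedAddCommGroup H] [InnerProductSpace ℂ H] [FiniteDimensional ℂ H]

/-- inner product of a vector of `V` against the compression equals inner against `F`. -/
lemma comp_inner (F : H →ₗ[ℂ] H) (V : Submodule ℂ H) (w : V) :
    ⟪w, ((Submodule.orthogonalProjectionOnto V).toLinearMap ∘ₗ F ∘ₗ V.subtype ∘ₗ
      (Submodule.orthogonalProjectionOnto V).toLinearMap ∘ₗ V.subtype) w⟫_ℂ = ⟪(w : H), F (w : H)⟫_ℂ := by
  simp only [LinearMap.comp_apply, Submodule.subtype_apply,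
    ContinuousLinearMap.coe_coe, Submodule.orthogonalProjectionOnto_mem_subspace_eq_self]
  rw [Submodule.inner_orthogonalProjectionOnto_eq_of_mem_left]

lemma compress_ray_le (F : H →ₗ[ℂ] H) {m : ℕ} (V : Submodule ℂ H)
    (c : OrthonormalBasis (Fin m) ℂ V) (r : Fin m → ℝ)
    (hc : ∀ i, ((Submodule.orthogonalProjectionOnto V).toLinearMap ∘ₗ F ∘ₗ V.subtype ∘ₗ
      (Submodule.orthogonalProjectionOnto V).toLinearMap ∘ₗ V.subtype) (c i) = (r i : ℂ) • c i)
    (s : Set (Fin m)) (t : ℝ) (hs : ∀ i ∈ s, r i ≤ t)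
    {w : H} (hw : w ∈ Submodule.span ℂ ((fun i => ((c i : V) : H)) '' s)) :
    RCLike.re ⟪w, F w⟫_ℂ ≤ t * ‖w‖ ^ 2 := by
  have himg : (fun i => ((c i : V) : H)) '' s = V.subtype '' ((fun i => c i) '' s) := by
    rw [Set.image_image]; rfl
  rw [himg, Submodule.span_image] at hw
  obtain ⟨v, hv, rfl⟩ := hw
  have h1 := ray_le c _ r hc s t hs hv
  rw [comp_inner F V v] at h1
  simpa using h1

lemma compress_ray_ge (F : H →ₗ[ℂ] H) {m : ℕ} (V : Submodule ℂ H)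
    (c : OrthonormalBasis (Fin m) ℂ V) (r : Fin m → ℝ)
    (hc : ∀ i, ((Submodule.orthogonalProjectionOnto V).toLinearMap ∘ₗ F ∘ₗ V.subtype ∘ₗ
      (Submodule.orthogonalProjectionOnto V).toLinearMap ∘ₗ V.subtype) (c i) = (r i : ℂ) • c i)
    (s : Set (Fin m)) (t : ℝ) (hs : ∀ i ∈ s, t ≤ r i)
    {w : H} (hw : w ∈ Submodule.span ℂ ((fun i => ((c i : V) : H)) '' s)) :
    t * ‖w‖ ^ 2 ≤ RCLike.re ⟪w, F w⟫_ℂ := by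
  have himg : (fun i => ((c i : V) : H)) '' s = V.subtype '' ((fun i => c i) '' s) := by
    rw [Set.image_image]; rfl
  rw [himg, Submodule.span_image] at hw
  obtain ⟨v, hv, rfl⟩ := hw
  have h1 := ray_ge c _ r hc s t hs hv
  rw [comp_inner F V v] at h1
  simpa using h1

/-- an eigenvector lies in the span of the basis eigenvectors with the same eigenvalue -/
lemma eig_mem {N : ℕ} (F : H →ₗ[ℂ] H) (hF : F.IsSymmetric) (Lam : Fin N → ℝ)
    (b : OrthonormalBasis (Fin N) ℂ H) (hb : ∀ i, F (b i) = (Lam i : ℂ) • b i)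
    {μ : ℝ} {v : H} (hv : F v = (μ : ℂ) • v) :
    v ∈ Submodule.span ℂ (b '' {i | Lam i = μ}) := by
  have hcoord : ∀ i, Lam i ≠ μ → ⟪b i, v⟫_ℂ = 0 := by
    intro i hi
    have h1 : ⟪F (b i), v⟫_ℂ = (Lam i : ℂ) * ⟪b i, v⟫_ℂ := by
      rw [hb i, inner_smul_left, Complex.conj_ofReal]
    have h2 : ⟪b i, F v⟫_ℂ = (μ : ℂ) * ⟪b i, v⟫_ℂ := by rw [hv, inner_smul_right]
    have h3 := hF (b i) v
    rw [h1, h2] at h3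
    have hc : ((Lam i : ℂ) - (μ : ℂ)) * ⟪b i, v⟫_ℂ = 0 := by rw [sub_mul, h3, sub_self]
    rcases mul_eq_zero.1 hc with h | h
    · exact absurd (by exact_mod_cast sub_eq_zero.1 h) hi
    · exact h
  rw [← b.sum_repr' v]
  refine Submodule.sum_mem _ fun i _ => ?_
  by_cases hi : Lam i = μ
  · exact Submodule.smul_mem _ _ (Submodule.subset_span ⟨i, hi, rfl⟩)
  · rw [hcoord i hi, zero_smul]; exact Submodule.zero_mem _

/-- coercivity: lower bound for the Gram form of a linearly independent family -/
lemma coercivity {r : ℕ} (x : Fin r → H) (hx : LinearIndependent ℂ x) :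
    ∃ δ > 0, ∀ a : Fin r → ℂ, δ * ∑ j, ‖a j‖ ^ 2 ≤ ‖∑ j, a j • x j‖ ^ 2 := by
  let f : EuclideanSpace ℂ (Fin r) →ₗ[ℂ] H :=
    (Fintype.linearCombination ℂ x).comp
      (WithLp.linearEquiv 2 ℂ (Fin r → ℂ)).toLinearMap
  have hfa : ∀ a : EuclideanSpace ℂ (Fin r), f a = ∑ j, a j • x j := fun a => rfl
  have hker : LinearMap.ker f = ⊥ := by
    rw [LinearMap.ker_eq_bot]
    intro a a' haa
    have h0 : f (a - a') = 0 := by rw [map_sub, haa, sub_self]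
    rw [hfa] at h0
    have := Fintype.linearIndependent_iff.1 hx _ h0
    apply (WithLp.linearEquiv 2 ℂ (Fin r → ℂ)).injective
    funext j
    have hj := this j
    simpa [sub_eq_zero] using hj
  obtain ⟨K, hK, hanti⟩ := f.exists_antilipschitzWith hker
  refine ⟨((K : ℝ) ^ 2)⁻¹, by positivity, fun a => ?_⟩
  set a' : EuclideanSpace ℂ (Fin r) := WithLp.toLp 2 a with ha'
  have hle : ‖a'‖ ≤ K * ‖f a'‖ := by
    simpa [dist_eq_norm] using hanti.le_mul_dist a' 0
  have hnsq : ‖a'‖ ^ 2 = ∑ j, ‖a' j‖ ^ 2 := by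
    rw [EuclideanSpace.norm_eq, Real.sq_sqrt (by positivity)]
  have hsq : ‖a'‖ ^ 2 ≤ (K : ℝ) ^ 2 * ‖f a'‖ ^ 2 := by
    rw [← mul_pow]
    exact pow_le_pow_left₀ (norm_nonneg _) hle 2
  rw [hnsq, hfa] at hsq
  rw [inv_mul_le_iff₀ (by positivity)]
  exact hsq

/-- expansion of the quadratic form on a linear combination -/
lemma inner_sum_sum {ι : Type*} [Fintype ι] (F : H →ₗ[ℂ] H) (p : ι → H) (a : ι → ℂ) :
    ⟪∑ s, a s • p s, F (∑ q, a q • p q)⟫_ℂ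
      = ∑ s, ∑ q, (starRingEnd ℂ) (a s) * a q * ⟪p s, F (p q)⟫_ℂ := by
  rw [map_sum, sum_inner]
  refine Finset.sum_congr rfl fun s _ => ?_
  rw [inner_sum]
  refine Finset.sum_congr rfl fun q _ => ?_
  rw [map_smul, inner_smul_left, inner_smul_right]
  ring

lemma inner_sum_sum' {ι : Type*} [Fintype ι] (p : ι → H) (a : ι → ℂ) :
    ⟪∑ s, a s • p s, ∑ q, a q • p q⟫_ℂ
      = ∑ s, ∑ q, (starRingEnd ℂ) (a s) * a q * ⟪p s, p q⟫_ℂ := by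
  simpa using inner_sum_sum (LinearMap.id) p a

lemma sum_diff_le {ι : Type*} [Fintype ι] (a : ι → ℂ) (B C : ι → ι → ℂ) {ε : ℝ}
    (h : ∀ s q, ‖B s q - C s q‖ ≤ ε) :
    ‖(∑ s, ∑ q, (starRingEnd ℂ) (a s) * a q * B s q)
      - ∑ s, ∑ q, (starRingEnd ℂ) (a s) * a q * C s q‖ ≤ ε * (∑ j, ‖a j‖) ^ 2 := by
  rw [← Finset.sum_sub_distrib]
  calc ‖∑ s, ((∑ q, (starRingEnd ℂ) (a s) * a q * B s q)
        - ∑ q, (starRingEnd ℂ) (a s) * a q * C s q)‖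
      ≤ ∑ s, ‖(∑ q, (starRingEnd ℂ) (a s) * a q * B s q)
        - ∑ q, (starRingEnd ℂ) (a s) * a q * C s q‖ := norm_sum_le _ _
    _ ≤ ∑ s, ∑ q, ‖a s‖ * ‖a q‖ * ε := by
        refine Finset.sum_le_sum fun s _ => ?_
        rw [← Finset.sum_sub_distrib]
        refine (norm_sum_le _ _).trans (Finset.sum_le_sum fun q _ => ?_)
        have : (starRingEnd ℂ) (a s) * a q * B s q - (starRingEnd ℂ) (a s) * a q * C s q
            = (starRingEnd ℂ) (a s) * a q * (B s q - C s q) := by ring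
        rw [this, norm_mul, norm_mul, RCLike.norm_conj]
        exact mul_le_mul_of_nonneg_left (h s q) (by positivity)
    _ = ε * (∑ j, ‖a j‖) ^ 2 := by
        rw [sq, Finset.sum_mul_sum]
        rw [Finset.mul_sum]
        refine Finset.sum_congr rfl fun s _ => ?_
        rw [Finset.mul_sum]
        refine Finset.sum_congr rfl fun q _ => ?_
        ring

lemma exists_nonzero_inf {W1 W2 V : Submodule ℂ H}
    (h1 : W1 ≤ V) (h2 : W2 ≤ V)
    (hd : Module.finrank ℂ V < Module.finrank ℂ W1 + Module.finrank ℂ W2) :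
    ∃ w : H, w ≠ 0 ∧ w ∈ W1 ∧ w ∈ W2 := by
  have hsup : Module.finrank ℂ ↥(W1 ⊔ W2) ≤ Module.finrank ℂ V :=
    Submodule.finrank_mono (sup_le h1 h2)
  have heq := Submodule.finrank_sup_add_finrank_inf_eq W1 W2
  have hpos : 0 < Module.finrank ℂ ↥(W1 ⊓ W2) := by omega
  obtain ⟨⟨w, hw⟩, hwne⟩ := Module.finrank_pos_iff_exists_ne_zero.1 hpos
  refine ⟨w, fun h0 => hwne (Subtype.ext (by simp [h0])), (Submodule.mem_inf.1 hw).1,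
    (Submodule.mem_inf.1 hw).2⟩

end Compression

end Stmt15
/-- Main approximation theorem (finite-dimensional version).
`F` is self-adjoint on a finite-dimensional complex inner product space `H` with
full list of eigenvalues `Lam : Fin N → ℝ` in non-decreasing order with
multiplicity (orthonormal eigenbasis `b`); `x 0, …, x (m-1)` are linearly
independent eigenvectors for the `m` smallest eigenvalues
`lam k = Lam k`, `k < m ≤ N`.  For each `k` a sequence `y n k → x k` in norm with
`⟨y n s, F (y n q)⟩ → ⟨x s, F (x q)⟩` for all `s, q`.  If, eventually in `n`,
`mu n : Fin m → ℝ` lists (non-decreasingly, via an orthonormal eigenbasis of the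
compression) the eigenvalues of the compression of `F` to
`𝒱ₙ = span(y n 0, …, y n (m-1))`, then `mu n k → lam k` for each `k`. -/
theorem stmt_15 {H : Type*} [NormedAddCommGroup H] [InnerProductSpace ℂ H]
    [FiniteDimensional ℂ H] {N m : ℕ} (hmN : m ≤ N)
    (F : H →ₗ[ℂ] H) (hF : F.IsSymmetric)
    (Lam : Fin N → ℝ) (hLam : Monotone Lam)
    (b : OrthonormalBasis (Fin N) ℂ H)
    (hb : ∀ i, F (b i) = (Lam i : ℂ) • b i)
    (lam : Fin m → ℝ) (hlam : ∀ k : Fin m, lam k = Lam (Fin.castLE hmN k))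
    (x : Fin m → H) (hxli : LinearIndependent ℂ x)
    (hxeig : ∀ k, F (x k) = (lam k : ℂ) • x k)
    (y : ℕ → Fin m → H)
    (hyconv : ∀ k, Tendsto (fun n => y n k) atTop (𝓝 (x k)))
    (hqconv : ∀ s q, Tendsto (fun n => ⟪y n s, F (y n q)⟫_ℂ) atTop
      (𝓝 ⟪x s, F (x q)⟫_ℂ))
    (mu : ℕ → Fin m → ℝ)
    (hmu : ∀ᶠ n in atTop,
      Monotone (mu n) ∧
        ∃ c : OrthonormalBasis (Fin m) ℂ (Submodule.span ℂ (Set.range (y n))),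
          ∀ i,
            ((Submodule.orthogonalProjectionOnto (Submodule.span ℂ (Set.range (y n)))).toLinearMap ∘ₗ
              F ∘ₗ (Submodule.span ℂ (Set.range (y n))).subtype ∘ₗ
              (Submodule.orthogonalProjectionOnto (Submodule.span ℂ (Set.range (y n)))).toLinearMap ∘ₗ
              (Submodule.span ℂ (Set.range (y n))).subtype) (c i) = (mu n i : ℂ) • c i) :
    ∀ k, Tendsto (fun n => mu n k) atTop (𝓝 (lam k)) := by
  intro k
  have hm0 : 0 < m := k.pos
  have hmR : (0 : ℝ) < (m : ℝ) := by exact_mod_cast hm0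
  have hkm : (k : ℕ) + 1 ≤ m := k.isLt
  have hkN : (k : ℕ) < N := lt_of_lt_of_le k.isLt hmN
  have hfrH : Module.finrank ℂ H = N := by
    rw [Module.finrank_eq_card_basis b.toBasis, Fintype.card_fin]
  -- LOWER BOUND (interlacing): eventually lam k ≤ mu n k
  have hlow : ∀ᶠ n in atTop, lam k ≤ mu n k := by
    filter_upwards [hmu] with n hn
    obtain ⟨hmon, c, hc⟩ := hn
    have hc'on : Orthonormal ℂ (fun i => ((c i : Submodule.span ℂ (Set.range (y n))) : H)) :=
      c.orthonormal.comp_linearIsometry (Submodule.span ℂ (Set.range (y n))).subtypeₗᵢ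
    set g1 : Fin ((k : ℕ) + 1) → Fin m := Fin.castLE hkm with hg1
    set g3 : Fin (N - (k : ℕ)) → Fin N := fun j => ⟨(k : ℕ) + (j : ℕ), by omega⟩ with hg3
    have hg3inj : Function.Injective g3 := by
      intro i j hij
      have := congrArg Fin.val hij
      simp only [hg3] at this
      exact Fin.ext (by omega)
    have hfr1 : Module.finrank ℂ
        (Submodule.span ℂ (Set.range ((fun i => ((c i : Submodule.span ℂ (Set.range (y n))) : H)) ∘ g1))) = (k : ℕ) + 1 := by
      rw [finrank_span_eq_card
        ((hc'on.comp g1 (Fin.castLE_injective hkm)).linearIndependent), Fintype.card_fin]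
    have hfr2 : Module.finrank ℂ
        (Submodule.span ℂ (Set.range (b ∘ g3))) = N - (k : ℕ) := by
      rw [finrank_span_eq_card
        ((b.orthonormal.comp g3 hg3inj).linearIndependent), Fintype.card_fin]
    obtain ⟨w, hw0, hw1, hw2⟩ := Stmt15.exists_nonzero_inf
      (le_top : Submodule.span ℂ (Set.range ((fun i => ((c i : Submodule.span ℂ (Set.range (y n))) : H)) ∘ g1)) ≤ ⊤)
      (le_top : Submodule.span ℂ (Set.range (b ∘ g3)) ≤ ⊤)
      (by rw [hfr1, hfr2, finrank_top, hfrH]; omega)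
    have hw1' : w ∈ Submodule.span ℂ
        ((fun i => ((c i : Submodule.span ℂ (Set.range (y n))) : H)) '' Set.range g1) := by
      rw [← Set.range_comp]; exact hw1
    have hw2' : w ∈ Submodule.span ℂ (⇑b '' Set.range g3) := by
      rw [← Set.range_comp]; exact hw2
    have hray1 : RCLike.re ⟪w, F w⟫_ℂ ≤ mu n k * ‖w‖ ^ 2 := by
      refine Stmt15.compress_ray_le F _ c (mu n) hc (Set.range g1) (mu n k) ?_ hw1'
      rintro i ⟨j, rfl⟩
      exact hmon (by simpa [hg1, Fin.le_def] using Nat.lt_succ_iff.mp j.isLt)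
    have hray2 : lam k * ‖w‖ ^ 2 ≤ RCLike.re ⟪w, F w⟫_ℂ := by
      refine Stmt15.ray_ge b F Lam hb (Set.range g3) (lam k) ?_ hw2'
      rintro i ⟨j, rfl⟩
      rw [hlam k]
      exact hLam (by simp [hg3, Fin.le_def])
    have hwpos : 0 < ‖w‖ ^ 2 := by
      have := norm_pos_iff.mpr hw0; positivity
    nlinarith [le_trans hray2 hray1]
  -- COERCIVITY for the subfamily of x
  obtain ⟨δ, hδ0, hδ⟩ := Stmt15.coercivity (x ∘ Fin.castLE hkm)
    (hxli.comp _ (Fin.castLE_injective hkm))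
  -- UPPER BOUND
  have hupp : ∀ ε : ℝ, 0 < ε → ∀ᶠ n in atTop, mu n k ≤ lam k + ε := by
    intro ε hε
    set ε₁ : ℝ := ε * δ / (8 * (m : ℝ)) with hε₁def
    set ε₂ : ℝ := min (δ / (2 * (m : ℝ))) (ε * δ / (8 * (m : ℝ) * (|lam k| + 1))) with hε₂def
    have h8m : (0 : ℝ) < 8 * (m : ℝ) := by nlinarith
    have h2m : (0 : ℝ) < 2 * (m : ℝ) := by nlinarith
    have hε₁0 : 0 < ε₁ := div_pos (by positivity) h8m
    have hε₂0 : 0 < ε₂ := lt_min (div_pos hδ0 h2m)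
      (div_pos (by positivity) (by positivity))
    have hq : ∀ᶠ n in atTop, ∀ s q : Fin m,
        ‖⟪y n s, F (y n q)⟫_ℂ - ⟪x s, F (x q)⟫_ℂ‖ ≤ ε₁ := by
      rw [Filter.eventually_all]; intro s
      rw [Filter.eventually_all]; intro q
      filter_upwards [Metric.tendsto_nhds.mp (hqconv s q) ε₁ hε₁0] with n hn
      rw [dist_eq_norm] at hn; exact hn.le
    have hg : ∀ᶠ n in atTop, ∀ s q : Fin m,
        ‖⟪y n s, y n q⟫_ℂ - ⟪x s, x q⟫_ℂ‖ ≤ ε₂ := by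
      rw [Filter.eventually_all]; intro s
      rw [Filter.eventually_all]; intro q
      have hti : Tendsto (fun n => ⟪y n s, y n q⟫_ℂ) atTop (𝓝 ⟪x s, x q⟫_ℂ) :=
        Filter.Tendsto.inner (hyconv s) (hyconv q)
      filter_upwards [Metric.tendsto_nhds.mp hti ε₂ hε₂0] with n hn
      rw [dist_eq_norm] at hn; exact hn.le
    filter_upwards [hmu, hq, hg] with n hn hq' hg'
    obtain ⟨hmon, c, hc⟩ := hn
    have hc'on : Orthonormal ℂ (fun i => ((c i : Submodule.span ℂ (Set.range (y n))) : H)) :=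
      c.orthonormal.comp_linearIsometry (Submodule.span ℂ (Set.range (y n))).subtypeₗᵢ
    have hfrV : Module.finrank ℂ (Submodule.span ℂ (Set.range (y n))) = m := by
      rw [Module.finrank_eq_card_basis c.toBasis, Fintype.card_fin]
    have hyli : LinearIndependent ℂ (y n) := by
      rw [linearIndependent_iff_card_eq_finrank_span, Fintype.card_fin]
      exact hfrV.symm
    set g2 : Fin (m - (k : ℕ)) → Fin m := fun j => ⟨(k : ℕ) + (j : ℕ), by omega⟩ with hg2
    have hg2inj : Function.Injective g2 := by
      intro i j hij
      have := congrArg Fin.val hij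
      simp only [hg2] at this
      exact Fin.ext (by omega)
    set f2 : Fin ((k : ℕ) + 1) → H := fun j => y n (Fin.castLE hkm j) with hf2
    have hfr1 : Module.finrank ℂ
        (Submodule.span ℂ (Set.range ((fun i => ((c i : Submodule.span ℂ (Set.range (y n))) : H)) ∘ g2))) = m - (k : ℕ) := by
      rw [finrank_span_eq_card ((hc'on.comp g2 hg2inj).linearIndependent), Fintype.card_fin]
    have hfr2 : Module.finrank ℂ (Submodule.span ℂ (Set.range f2)) = (k : ℕ) + 1 := by
      have hli2 : LinearIndependent ℂ f2 := hyli.comp _ (Fin.castLE_injective hkm)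
      rw [finrank_span_eq_card hli2, Fintype.card_fin]
    have hle1 : Submodule.span ℂ (Set.range ((fun i => ((c i : Submodule.span ℂ (Set.range (y n))) : H)) ∘ g2))
        ≤ Submodule.span ℂ (Set.range (y n)) := by
      rw [Submodule.span_le]; rintro _ ⟨j, rfl⟩; exact (c (g2 j)).2
    have hle2 : Submodule.span ℂ (Set.range f2) ≤ Submodule.span ℂ (Set.range (y n)) := by
      rw [Submodule.span_le]; rintro _ ⟨j, rfl⟩
      exact Submodule.subset_span ⟨Fin.castLE hkm j, rfl⟩
    obtain ⟨w, hw0, hw1, hw2⟩ := Stmt15.exists_nonzero_inf hle1 hle2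
      (by rw [hfr1, hfr2, hfrV]; omega)
    rw [Submodule.mem_span_range_iff_exists_fun] at hw2
    obtain ⟨a, ha⟩ := hw2
    set u : H := ∑ j, a j • x (Fin.castLE hkm j) with hu
    set T : ℝ := ∑ j, ‖a j‖ ^ 2 with hT
    set M : ℝ := (∑ j, ‖a j‖) ^ 2 with hM
    have hTpos : 0 < T := by
      have hne : ∃ j, a j ≠ 0 := by
        by_contra hall
        push_neg at hall
        exact hw0 (by rw [← ha]; simp [hall])
      obtain ⟨j0, hj0⟩ := hne
      have h1 : 0 < ‖a j0‖ ^ 2 := by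
        have := norm_pos_iff.mpr hj0; positivity
      exact lt_of_lt_of_le h1 (Finset.single_le_sum
        (f := fun j => ‖a j‖ ^ 2) (fun _ _ => by positivity) (Finset.mem_univ j0))
    have hMT : M ≤ (m : ℝ) * T := by
      have h1 : M ≤ ((k : ℕ) + 1 : ℕ) * T := by
        simpa [hM, hT] using sq_sum_le_card_mul_sum_sq
          (s := Finset.univ) (f := fun j : Fin ((k : ℕ) + 1) => ‖a j‖)
      refine h1.trans (mul_le_mul_of_nonneg_right ?_ (by positivity))
      exact_mod_cast hkm
    -- quadratic form identities
    have hwFw : ⟪w, F w⟫_ℂ = ∑ s, ∑ q, (starRingEnd ℂ) (a s) * a q *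
        ⟪y n (Fin.castLE hkm s), F (y n (Fin.castLE hkm q))⟫_ℂ := by
      rw [← ha]; exact Stmt15.inner_sum_sum F f2 a
    have huFu : ⟪u, F u⟫_ℂ = ∑ s, ∑ q, (starRingEnd ℂ) (a s) * a q *
        ⟪x (Fin.castLE hkm s), F (x (Fin.castLE hkm q))⟫_ℂ := by
      rw [hu]; exact Stmt15.inner_sum_sum F _ a
    have hww : ⟪w, w⟫_ℂ = ∑ s, ∑ q, (starRingEnd ℂ) (a s) * a q *
        ⟪y n (Fin.castLE hkm s), y n (Fin.castLE hkm q)⟫_ℂ := by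
      rw [← ha]; exact Stmt15.inner_sum_sum' f2 a
    have huu : ⟪u, u⟫_ℂ = ∑ s, ∑ q, (starRingEnd ℂ) (a s) * a q *
        ⟪x (Fin.castLE hkm s), x (Fin.castLE hkm q)⟫_ℂ := by
      rw [hu]; exact Stmt15.inner_sum_sum' _ a
    have hA : ‖⟪w, F w⟫_ℂ - ⟪u, F u⟫_ℂ‖ ≤ ε₁ * M := by
      rw [hwFw, huFu]
      exact Stmt15.sum_diff_le a _ _ (fun s q => hq' _ _)
    have hG : ‖⟪w, w⟫_ℂ - ⟪u, u⟫_ℂ‖ ≤ ε₂ * M := by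
      rw [hww, huu]
      exact Stmt15.sum_diff_le a _ _ (fun s q => hg' _ _)
    have h1 : RCLike.re ⟪w, F w⟫_ℂ - RCLike.re ⟪u, F u⟫_ℂ ≤ ε₁ * M := by
      have h2 : RCLike.re ⟪w, F w⟫_ℂ - RCLike.re ⟪u, F u⟫_ℂ
          = RCLike.re (⟪w, F w⟫_ℂ - ⟪u, F u⟫_ℂ) := by rw [map_sub]
      rw [h2]
      exact ((RCLike.abs_re_le_norm _).trans hA).trans' (le_abs_self _)
    have h2 : |‖w‖ ^ 2 - ‖u‖ ^ 2| ≤ ε₂ * M := by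
      have h3 : ‖w‖ ^ 2 - ‖u‖ ^ 2 = RCLike.re (⟪w, w⟫_ℂ - ⟪u, u⟫_ℂ) := by
        rw [map_sub, inner_self_eq_norm_sq, inner_self_eq_norm_sq]
      rw [h3]
      exact (RCLike.abs_re_le_norm _).trans hG
    have hw1' : w ∈ Submodule.span ℂ
        ((fun i => ((c i : Submodule.span ℂ (Set.range (y n))) : H)) '' Set.range g2) := by
      rw [← Set.range_comp]; exact hw1
    have hray : mu n k * ‖w‖ ^ 2 ≤ RCLike.re ⟪w, F w⟫_ℂ := by
      refine Stmt15.compress_ray_ge F _ c (mu n) hc (Set.range g2) (mu n k) ?_ hw1'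
      rintro i ⟨j, rfl⟩
      exact hmon (by simp [hg2, Fin.le_def])
    have hxray : RCLike.re ⟪u, F u⟫_ℂ ≤ lam k * ‖u‖ ^ 2 := by
      refine Stmt15.ray_le b F Lam hb {i | Lam i ≤ lam k} (lam k) (fun i hi => hi) ?_
      rw [hu]
      refine Submodule.sum_mem _ fun j _ => Submodule.smul_mem _ _ ?_
      have hx_mem := Stmt15.eig_mem F hF Lam b hb (hxeig (Fin.castLE hkm j))
      refine Submodule.span_mono (Set.image_mono ?_) hx_mem
      intro i hi
      rw [Set.mem_setOf_eq] at hi ⊢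
      rw [hi, hlam, hlam]
      exact hLam (by simp [Fin.le_def]; exact Nat.lt_succ_iff.mp j.isLt)
    have hδu : δ * T ≤ ‖u‖ ^ 2 := by
      have := hδ a
      simpa [hu, hT, Function.comp] using this
    have hε₂a : ε₂ ≤ δ / (2 * (m : ℝ)) := min_le_left _ _
    have hε₂b : ε₂ ≤ ε * δ / (8 * (m : ℝ) * (|lam k| + 1)) := min_le_right _ _
    have habs : |‖w‖ ^ 2 - ‖u‖ ^ 2| ≤ ε₂ * M := h2
    have hboundG : ε₂ * M ≤ (δ / 2) * T := by
      calc ε₂ * M ≤ ε₂ * ((m : ℝ) * T) :=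
            mul_le_mul_of_nonneg_left hMT hε₂0.le
        _ ≤ (δ / (2 * (m : ℝ))) * ((m : ℝ) * T) :=
            mul_le_mul_of_nonneg_right hε₂a (by positivity)
        _ = (δ / 2) * T := by field_simp
    have hwsq : (δ / 2) * T ≤ ‖w‖ ^ 2 := by
      have ha1 := (abs_le.mp habs).1
      nlinarith
    have hfin : (mu n k - lam k) * ‖w‖ ^ 2 ≤ (ε / 2) * ((δ / 2) * T) := by
      have h5 : lam k * ‖u‖ ^ 2 - lam k * ‖w‖ ^ 2 ≤ |lam k| * (ε₂ * M) := by
        have h6 : lam k * (‖u‖ ^ 2 - ‖w‖ ^ 2) ≤ |lam k| * |‖u‖ ^ 2 - ‖w‖ ^ 2| := by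
          rw [← abs_mul]; exact le_abs_self _
        have h7 : |‖u‖ ^ 2 - ‖w‖ ^ 2| ≤ ε₂ * M := by rwa [abs_sub_comm]
        nlinarith [abs_nonneg (lam k)]
      have h8 : ε₁ * M ≤ (ε * δ / 8) * T := by
        calc ε₁ * M ≤ ε₁ * ((m : ℝ) * T) := mul_le_mul_of_nonneg_left hMT hε₁0.le
          _ = (ε * δ / 8) * T := by rw [hε₁def]; field_simp
      have h9 : |lam k| * (ε₂ * M) ≤ (ε * δ / 8) * T := by
        have h10 : ε₂ * M ≤ ε₂ * ((m : ℝ) * T) := mul_le_mul_of_nonneg_left hMT hε₂0.le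
        have h11 : |lam k| * (ε₂ * ((m : ℝ) * T))
            ≤ |lam k| * ((ε * δ / (8 * (m : ℝ) * (|lam k| + 1))) * ((m : ℝ) * T)) := by
          refine mul_le_mul_of_nonneg_left ?_ (abs_nonneg _)
          exact mul_le_mul_of_nonneg_right hε₂b (by positivity)
        have h12 : |lam k| * ((ε * δ / (8 * (m : ℝ) * (|lam k| + 1))) * ((m : ℝ) * T))
            ≤ (ε * δ / 8) * T := by
          have hl1 : (0 : ℝ) < |lam k| + 1 := by positivity
          have key : |lam k| / (|lam k| + 1) ≤ 1 :=
            (div_le_one hl1).mpr (by linarith)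
          have heq : |lam k| * ((ε * δ / (8 * (m : ℝ) * (|lam k| + 1))) * ((m : ℝ) * T))
              = (|lam k| / (|lam k| + 1)) * ((ε * δ / 8) * T) := by
            field_simp
          rw [heq]
          calc (|lam k| / (|lam k| + 1)) * ((ε * δ / 8) * T)
              ≤ 1 * ((ε * δ / 8) * T) :=
                mul_le_mul_of_nonneg_right key (by positivity)
            _ = (ε * δ / 8) * T := one_mul _
        calc |lam k| * (ε₂ * M) ≤ |lam k| * (ε₂ * ((m : ℝ) * T)) :=
              mul_le_mul_of_nonneg_left h10 (abs_nonneg _)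
          _ ≤ _ := h11
          _ ≤ _ := h12
      have hchain : mu n k * ‖w‖ ^ 2 ≤ lam k * ‖w‖ ^ 2 + (ε * δ / 4) * T := by
        have := hray.trans (by linarith : RCLike.re ⟪w, F w⟫_ℂ ≤
          lam k * ‖u‖ ^ 2 + ε₁ * M)
        nlinarith
      nlinarith
    by_cases hcmp : mu n k ≤ lam k
    · linarith
    · push_neg at hcmp
      have h13 : (mu n k - lam k) * ((δ / 2) * T) ≤ (ε / 2) * ((δ / 2) * T) := by
        refine le_trans ?_ hfin
        exact mul_le_mul_of_nonneg_left hwsq (by linarith)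
      have h14 : mu n k - lam k ≤ ε / 2 :=
        le_of_mul_le_mul_right h13 (by positivity)
      linarith
  -- combine
  rw [Metric.tendsto_atTop]
  intro ε hε
  obtain ⟨n0, hn0⟩ := eventually_atTop.1 (hlow.and (hupp (ε / 2) (by linarith)))
  refine ⟨n0, fun n hn => ?_⟩
  obtain ⟨h1', h2'⟩ := hn0 n hn
  rw [Real.dist_eq, abs_sub_lt_iff]
  constructor <;> linarith
end
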